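/- Let A be a bounded linear operator on H. Then for every real number r ≥ 1, ber(A)^{2r} ≤ (1/2)·ber(A²)^r + (1/4)·ber(|A|^{2r} + |A*|^{2r}). -/

import Mathlib

set_option synthInstance.maxHeartbeats 1000000
set_option maxHeartbeats 1000000

open scoped NNReal
open ContinuousLinearMap RCLike
open scoped ComplexConjugate
set_option linter.unusedSectionVars false

/-- The Berezin number of an operator `T`, relative to the family `k` of
(normalized reproducing kernel) vectors indexed by `Ω`. -/
noncomputable def ber {H : Type*} [NormedAddCommGroup H] [InnerProductSpace ℂ H]
    {Ω : Type*} (k : Ω → H) (T : H →L[ℂ] H) : ℝ :=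
  ⨆ lam : Ω, ‖(inner ℂ (T (k lam)) (k lam) : ℂ)‖

/-- The absolute value `|T| = (T*T)^(1/2)` of a bounded operator. -/
noncomputable def opAbs {H : Type*} [NormedAddCommGroup H] [InnerProductSpace ℂ H]
    [CompleteSpace H] (T : H →L[ℂ] H) : H →L[ℂ] H :=
  CFC.sqrt (adjoint T * T)

section Helpers

variable {H : Type*} [NormedAddCommGroup H] [InnerProductSpace ℂ H]

/-- Buzano's inequality. -/
lemma buzano (x u v : H) (hx : ‖x‖ = 1) :
    ‖(inner ℂ u x : ℂ) * (inner ℂ x v : ℂ)‖ ≤ (‖(inner ℂ u v : ℂ)‖ + ‖u‖ * ‖v‖) / 2 := by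
  set c : ℂ := inner ℂ x u with hc
  set w : H := (2 * c) • x - u with hwdef
  have hw : ‖w‖ = ‖u‖ := by
    rw [← sq_eq_sq₀ (norm_nonneg _) (norm_nonneg _), hwdef, @norm_sub_sq ℂ]
    have h2 : (inner ℂ ((2 * c) • x) u : ℂ) = conj (2 * c) * c := by
      rw [inner_smul_left, hc]
    have h3 : ‖(2 * c) • x‖ = 2 * ‖c‖ := by
      rw [norm_smul, hx]; simp
    rw [h2, h3]
    have h4 : re (conj (2 * c) * c) = 2 * ‖c‖ ^ 2 := by
      have : conj (2 * c) * c = 2 * (conj c * c) := by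
        rw [map_mul, Complex.conj_ofNat]; ring
      rw [this, RCLike.conj_mul]
      simp [← RCLike.ofReal_pow]
      norm_cast
    rw [h4]; ring
  have hkey : (inner ℂ u x : ℂ) * inner ℂ x v = ((inner ℂ w v : ℂ) + inner ℂ u v) / 2 := by
    rw [hwdef, inner_sub_left, inner_smul_left, hc]
    have : (conj (2 * c)) = 2 * conj c := by rw [map_mul, Complex.conj_ofNat]
    rw [this]
    have hcx : (inner ℂ u x : ℂ) = conj c := by rw [hc, ← inner_conj_symm]
    rw [hcx]
    ring
  rw [hkey]
  have h5 : ‖((inner ℂ w v : ℂ) + inner ℂ u v) / 2‖ ≤ (‖(inner ℂ w v : ℂ)‖ + ‖(inner ℂ u v : ℂ)‖) / 2 := by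
    rw [norm_div]
    simp only [Complex.norm_ofNat]
    gcongr
    exact norm_add_le _ _
  refine h5.trans ?_
  have h6 : ‖(inner ℂ w v : ℂ)‖ ≤ ‖u‖ * ‖v‖ := by
    rw [← hw]; exact norm_inner_le_norm w v
  linarith

lemma re_inner_smul_clm (c : ℝ) (T : H →L[ℂ] H) (x : H) :
    re (inner ℂ ((c • T) x) x : ℂ) = c * re (inner ℂ (T x) x : ℂ) := by
  rw [smul_apply]
  rw [show (c • T x) = (c : ℂ) • T x from (RCLike.real_smul_eq_coe_smul (K := ℂ) c (T x))]
  rw [inner_smul_left]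
  simp [Complex.conj_ofReal]

lemma re_inner_one_clm (c : ℝ) (x : H) (hx : ‖x‖ = 1) :
    re (inner ℂ ((c • (1 : H →L[ℂ] H)) x) x : ℂ) = c := by
  rw [re_inner_smul_clm]
  simp [inner_self_eq_norm_sq, hx]

variable [CompleteSpace H]

lemma rpow_eq_real_cfc (T : H →L[ℂ] H) (hT : 0 ≤ T) (p : ℝ) :
    CFC.rpow T p = cfc (fun t : ℝ => t ^ p) T := by
  rw [CFC.rpow, cfc_nnreal_eq_real (fun x : ℝ≥0 => x ^ p) T hT]
  apply cfc_congr
  intro t ht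
  have h0 : 0 ≤ t := spectrum_nonneg_of_nonneg hT ht
  simp [NNReal.coe_rpow, Real.coe_toNNReal t h0]

lemma mccarthy (T : H →L[ℂ] H) (hT : 0 ≤ T) {p : ℝ} (hp : 1 ≤ p) {x : H} (hx : ‖x‖ = 1) :
    (re (inner ℂ (T x) x : ℂ)) ^ p ≤ re (inner ℂ (CFC.rpow T p x) x : ℂ) := by
  have hTP := (nonneg_iff_isPositive T).mp hT
  have hTsa : IsSelfAdjoint T := hTP.isSelfAdjoint
  have hE : CFC.rpow T p = cfc (fun t : ℝ => t ^ p) T := rpow_eq_real_cfc T hT p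
  set s : ℝ := re (inner ℂ (T x) x : ℂ) with hsdef
  have hs0 : 0 ≤ s := hTP.re_inner_nonneg_left x
  have hrnn : 0 ≤ CFC.rpow T p := CFC.rpow_nonneg
  have hRnn : 0 ≤ re (inner ℂ (CFC.rpow T p x) x : ℂ) :=
    ((nonneg_iff_isPositive _).mp hrnn).re_inner_nonneg_left x
  rcases eq_or_lt_of_le hp with hp1 | hp1
  · have h1 : CFC.rpow T p = T := by
      rw [← hp1]; exact CFC.rpow_one T hT
    rw [h1, ← hp1, Real.rpow_one]
  rcases eq_or_lt_of_le hs0 with hs1 | hs1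
  · rw [← hs1, Real.zero_rpow (by positivity)]
    exact hRnn
  set q : ℝ := p / (p - 1) with hqdef
  have hpq : p.HolderConjugate q := Real.HolderConjugate.conjExponent hp1
  have hcont : Continuous (fun t : ℝ => t ^ p) :=
    continuous_iff_continuousAt.2 fun t =>
      Real.continuousAt_rpow_const t p (Or.inr (by positivity))
  have hmono : cfc (fun t : ℝ => s ^ (p - 1) * t) T ≤
      cfc (fun t : ℝ => p⁻¹ * t ^ p + s ^ p / q) T := by
    apply cfc_mono
    · intro t ht
      have h0t : 0 ≤ t := spectrum_nonneg_of_nonneg hT ht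
      have hy := Real.young_inequality_of_nonneg h0t (Real.rpow_nonneg hs0 (p - 1)) hpq
      have hq1 : (s ^ (p - 1)) ^ q = s ^ p := by
        rw [← Real.rpow_mul hs0, hpq.sub_one_mul_conj]
      rw [hq1, div_eq_inv_mul (t ^ p) p] at hy
      rw [mul_comm (s ^ (p - 1)) t]
      exact hy
    · exact (continuous_const.mul continuous_id).continuousOn
    · exact ((continuous_const.mul hcont).add continuous_const).continuousOn
  have hL : cfc (fun t : ℝ => s ^ (p - 1) * t) T = s ^ (p - 1) • T := by
    rw [cfc_const_mul (s ^ (p - 1)) (fun t : ℝ => t) T continuous_id.continuousOn, cfc_id' ℝ T]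
  have hR : cfc (fun t : ℝ => p⁻¹ * t ^ p + s ^ p / q) T =
      p⁻¹ • cfc (fun t : ℝ => t ^ p) T + (s ^ p / q) • (1 : H →L[ℂ] H) := by
    rw [cfc_add (a := T) (fun t : ℝ => p⁻¹ * t ^ p) (fun _ => s ^ p / q) ((continuous_const.mul hcont).continuousOn) (by fun_prop),
      cfc_const_mul p⁻¹ (fun t : ℝ => t ^ p) T hcont.continuousOn,
      cfc_const (s ^ p / q) T, Algebra.algebraMap_eq_smul_one]
  rw [hL, hR] at hmono
  have hx2 := ((le_def _ _).mp hmono).re_inner_nonneg_left x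
  rw [sub_apply, inner_sub_left, map_sub, sub_nonneg] at hx2
  rw [re_inner_smul_clm] at hx2
  have hadd : re (inner ℂ ((p⁻¹ • cfc (fun t : ℝ => t ^ p) T + (s ^ p / q) • (1 : H →L[ℂ] H)) x) x : ℂ)
      = p⁻¹ * re (inner ℂ (cfc (fun t : ℝ => t ^ p) T x) x : ℂ) + s ^ p / q := by
    rw [add_apply, inner_add_left, map_add, re_inner_smul_clm, re_inner_one_clm _ _ hx]
  rw [hadd] at hx2
  set R : ℝ := re (inner ℂ (cfc (fun t : ℝ => t ^ p) T x) x : ℂ) with hRdef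
  -- hx2 : s ^ (p-1) * s ≤ p⁻¹ * R + s ^ p / q
  have hsp : s ^ p = s ^ (p - 1) * s := by
    rw [← Real.rpow_add_one hs1.ne' (p - 1), sub_add_cancel]
  have e2 : 1 - q⁻¹ = p⁻¹ := by linarith [hpq.inv_add_inv_eq_one]
  have e3 : p⁻¹ * (s ^ p) ≤ p⁻¹ * R := by
    have : p⁻¹ * (s ^ p) = s ^ p - s ^ p * q⁻¹ := by rw [← e2]; ring
    rw [this, div_eq_mul_inv (s ^ p) q] at *
    linarith [hx2, hsp]
  have := (mul_le_mul_iff_right₀ (inv_pos.2 hpq.pos)).mp e3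
  rw [hE]
  exact this

lemma adjoint_mul_self_nonneg' (A : H →L[ℂ] H) : (0 : H →L[ℂ] H) ≤ adjoint A * A := by
  rw [← star_eq_adjoint]
  exact star_mul_self_nonneg A

lemma rpow_opAbs (A : H →L[ℂ] H) {r : ℝ} (hr : 0 < r) :
    CFC.rpow (opAbs A) (2 * r) = CFC.rpow (adjoint A * A) r := by
  have h0 : (0 : H →L[ℂ] H) ≤ adjoint A * A := adjoint_mul_self_nonneg' A
  rw [opAbs, CFC.sqrt_eq_rpow, CFC.rpow_eq_pow, CFC.rpow_eq_pow,
    CFC.rpow_rpow_of_exponent_nonneg _ _ _ (by norm_num) (by positivity) h0]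
  have : (1/2) * (2*r) = r := by ring
  rw [this]

lemma norm_sq_eq_re_inner (A : H →L[ℂ] H) (x : H) :
    ‖A x‖ ^ 2 = re (inner ℂ ((adjoint A * A) x) x : ℂ) := by
  rw [ContinuousLinearMap.mul_apply, adjoint_inner_left, inner_self_eq_norm_sq]

/-- convexity of rpow -/
lemma avg_rpow {u v : ℝ} (hu : 0 ≤ u) (hv : 0 ≤ v) {p : ℝ} (hp : 1 ≤ p) :
    ((u + v) / 2) ^ p ≤ (u ^ p + v ^ p) / 2 := by
  lift u to ℝ≥0 using hu
  lift v to ℝ≥0 using hv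
  have h := NNReal.rpow_arith_mean_le_arith_mean2_rpow (1/2) (1/2) u v (by rw [← NNReal.coe_inj]; push_cast; norm_num) hp
  have h' := (NNReal.coe_le_coe).2 h
  push_cast at h'
  calc (((u:ℝ) + v) / 2) ^ p = ((1/2 : ℝ) * u + (1/2) * v) ^ p := by ring_nf
    _ ≤ (1/2 : ℝ) * u ^ p + (1/2) * v ^ p := h'
    _ = ((u:ℝ) ^ p + v ^ p) / 2 := by ring

variable {Ω : Type*} [Nonempty Ω]

lemma aux_ber_bdd (k : Ω → H) (hk : ∀ lam, ‖k lam‖ = 1) (T : H →L[ℂ] H) :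
    BddAbove (Set.range fun lam : Ω => ‖(inner ℂ (T (k lam)) (k lam) : ℂ)‖) := by
  refine ⟨‖T‖, ?_⟩
  rintro _ ⟨lam, rfl⟩
  calc ‖(inner ℂ (T (k lam)) (k lam) : ℂ)‖ ≤ ‖T (k lam)‖ * ‖k lam‖ := norm_inner_le_norm _ _
    _ ≤ (‖T‖ * ‖k lam‖) * ‖k lam‖ := by gcongr; exact T.le_opNorm _
    _ = ‖T‖ := by rw [hk]; ring

lemma aux_le_ber (k : Ω → H) (hk : ∀ lam, ‖k lam‖ = 1) (T : H →L[ℂ] H) (lam : Ω) :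
    ‖(inner ℂ (T (k lam)) (k lam) : ℂ)‖ ≤ ber k T :=
  le_ciSup (aux_ber_bdd k hk T) lam

lemma aux_ber_nonneg (k : Ω → H) (hk : ∀ lam, ‖k lam‖ = 1) (T : H →L[ℂ] H) :
    0 ≤ ber k T :=
  le_trans (norm_nonneg _) (aux_le_ber k hk T (Classical.arbitrary Ω))

end Helpers

theorem berezin_power_inequality_alpha_one
    {H : Type*} [NormedAddCommGroup H] [InnerProductSpace ℂ H] [CompleteSpace H]
    {Ω : Type*} [Nonempty Ω] (k : Ω → H) (hk : ∀ lam, ‖k lam‖ = 1)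
    (A : H →L[ℂ] H) (r : ℝ) (hr : 1 ≤ r) :
    ber k A ^ (2 * r) ≤
      (1 / 2 : ℝ) * ber k (A * A) ^ r
        + (1 / 4 : ℝ) * ber k (CFC.rpow (opAbs A) (2 * r)
            + CFC.rpow (opAbs (adjoint A)) (2 * r)) := by
  have hr0 : (0:ℝ) < r := lt_of_lt_of_le zero_lt_one hr
  have h2r : (0:ℝ) < 2 * r := by linarith
  set P : H →L[ℂ] H := CFC.rpow (opAbs A) (2 * r) + CFC.rpow (opAbs (adjoint A)) (2 * r)
    with hPdef
  set C : ℝ := (1 / 2 : ℝ) * ber k (A * A) ^ r + (1 / 4 : ℝ) * ber k P with hCdef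
  have hber1 : 0 ≤ ber k (A * A) := aux_ber_nonneg k hk _
  have hberP : 0 ≤ ber k P := aux_ber_nonneg k hk _
  have hCnn : 0 ≤ C :=
    add_nonneg (mul_nonneg (by norm_num) (Real.rpow_nonneg hber1 r))
      (mul_nonneg (by norm_num) hberP)
  have key : ∀ lam : Ω, ‖(inner ℂ (A (k lam)) (k lam) : ℂ)‖ ^ (2 * r) ≤ C := by
    intro lam
    set x := k lam with hxdef
    have hx : ‖x‖ = 1 := hk lam
    set a : ℝ := ‖(inner ℂ (A x) x : ℂ)‖ with hadef
    set b : ℝ := ‖(inner ℂ ((A * A) x) x : ℂ)‖ with hbdef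
    set c : ℝ := ‖A x‖ with hcdef
    set d : ℝ := ‖adjoint A x‖ with hddef
    have hbuz : a ^ 2 ≤ (b + c * d) / 2 := by
      have h := buzano x (A x) (adjoint A x) hx
      have e1 : (inner ℂ x (adjoint A x) : ℂ) = inner ℂ (A x) x := adjoint_inner_right A x x
      have e2 : ‖(inner ℂ (A x) (adjoint A x) : ℂ)‖ = b := by
        rw [hbdef]
        calc ‖(inner ℂ (A x) (adjoint A x) : ℂ)‖
            = ‖(inner ℂ (adjoint A x) (A x) : ℂ)‖ := norm_inner_symm _ _
          _ = ‖(inner ℂ x (A (A x)) : ℂ)‖ := by rw [adjoint_inner_left]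
          _ = ‖(inner ℂ (A (A x)) x : ℂ)‖ := norm_inner_symm _ _
          _ = ‖(inner ℂ ((A * A) x) x : ℂ)‖ := by rw [ContinuousLinearMap.mul_apply]
      rw [e1, e2, norm_mul] at h
      calc a ^ 2 = a * a := sq a
        _ ≤ (b + c * d) / 2 := h
    have h2 : a ^ (2 * r) = ((a ^ 2 : ℝ)) ^ r := by
      rw [← Real.rpow_natCast a 2, ← Real.rpow_mul (norm_nonneg _)]
      norm_cast
    have h3 : ((a ^ 2 : ℝ)) ^ r ≤ ((b + c * d) / 2) ^ r :=
      Real.rpow_le_rpow (sq_nonneg a) hbuz hr0.le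
    have h4 : ((b + c * d) / 2) ^ r ≤ (b ^ r + (c * d) ^ r) / 2 :=
      avg_rpow (norm_nonneg _) (mul_nonneg (norm_nonneg _) (norm_nonneg _)) hr
    have h5 : (c * d) ^ r = c ^ r * d ^ r := Real.mul_rpow (norm_nonneg _) (norm_nonneg _)
    have h6 : c ^ r * d ^ r ≤ ((c ^ r) ^ 2 + (d ^ r) ^ 2) / 2 := by
      nlinarith [sq_nonneg (c ^ r - d ^ r)]
    have h7 : ((c ^ r : ℝ)) ^ 2 = c ^ (2 * r) := by
      rw [← Real.rpow_natCast (c ^ r) 2, ← Real.rpow_mul (norm_nonneg _)]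
      norm_cast
      rw [mul_comm r 2]
    have h7' : ((d ^ r : ℝ)) ^ 2 = d ^ (2 * r) := by
      rw [← Real.rpow_natCast (d ^ r) 2, ← Real.rpow_mul (norm_nonneg _)]
      norm_cast
      rw [mul_comm r 2]
    have hca : c ^ (2 * r) ≤ re (inner ℂ ((CFC.rpow (opAbs A) (2 * r)) x) x : ℂ) := by
      have h8 : c ^ (2 * r) = (re (inner ℂ ((adjoint A * A) x) x : ℂ)) ^ r := by
        rw [← _root_.norm_sq_eq_re_inner, ← Real.rpow_natCast c 2, ← Real.rpow_mul (norm_nonneg _)]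
        norm_cast
      rw [h8, rpow_opAbs A hr0]
      exact mccarthy _ (adjoint_mul_self_nonneg' A) hr hx
    have hda : d ^ (2 * r) ≤ re (inner ℂ ((CFC.rpow (opAbs (adjoint A)) (2 * r)) x) x : ℂ) := by
      have h8 : d ^ (2 * r)
          = (re (inner ℂ ((adjoint (adjoint A) * adjoint A) x) x : ℂ)) ^ r := by
        rw [← _root_.norm_sq_eq_re_inner, ← Real.rpow_natCast d 2, ← Real.rpow_mul (norm_nonneg _)]
        norm_cast
      rw [h8, rpow_opAbs (adjoint A) hr0]
      exact mccarthy _ (adjoint_mul_self_nonneg' (adjoint A)) hr hx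
    have h9 : re (inner ℂ (P x) x : ℂ)
        = re (inner ℂ ((CFC.rpow (opAbs A) (2 * r)) x) x : ℂ)
          + re (inner ℂ ((CFC.rpow (opAbs (adjoint A)) (2 * r)) x) x : ℂ) := by
      rw [hPdef, add_apply, inner_add_left, map_add]
    have h10 : re (inner ℂ (P x) x : ℂ) ≤ ber k P :=
      le_trans (RCLike.re_le_norm _) (aux_le_ber k hk P lam)
    have h11 : b ≤ ber k (A * A) := aux_le_ber k hk (A * A) lam
    have h12 : b ^ r ≤ ber k (A * A) ^ r :=
      Real.rpow_le_rpow (norm_nonneg _) h11 hr0.le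
    calc a ^ (2 * r) = ((a ^ 2 : ℝ)) ^ r := h2
      _ ≤ ((b + c * d) / 2) ^ r := h3
      _ ≤ (b ^ r + (c * d) ^ r) / 2 := h4
      _ ≤ (b ^ r + ((c ^ r) ^ 2 + (d ^ r) ^ 2) / 2) / 2 := by rw [h5]; linarith
      _ = b ^ r / 2 + (c ^ (2 * r) + d ^ (2 * r)) / 4 := by rw [h7, h7']; ring
      _ ≤ ber k (A * A) ^ r / 2 + re (inner ℂ (P x) x : ℂ) / 4 := by
          rw [h9]; linarith [hca, hda, h12]
      _ ≤ C := by rw [hCdef]; linarith [h10]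
  have hsup : ber k A ≤ C ^ (1 / (2 * r)) := by
    refine ciSup_le fun lam => ?_
    have h1 := key lam
    have h2 : ‖(inner ℂ (A (k lam)) (k lam) : ℂ)‖
        = (‖(inner ℂ (A (k lam)) (k lam) : ℂ)‖ ^ (2 * r)) ^ (1 / (2 * r)) := by
      rw [← Real.rpow_mul (norm_nonneg _), mul_one_div, div_self h2r.ne', Real.rpow_one]
    rw [h2]
    exact Real.rpow_le_rpow (Real.rpow_nonneg (norm_nonneg _) _) h1 (by positivity)
  have hfin : ber k A ^ (2 * r) ≤ (C ^ (1 / (2 * r))) ^ (2 * r) :=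
    Real.rpow_le_rpow (aux_ber_nonneg k hk A) hsup h2r.le
  calc ber k A ^ (2 * r) ≤ (C ^ (1 / (2 * r))) ^ (2 * r) := hfin
    _ = C := by
        rw [← Real.rpow_mul hCnn, one_div, inv_mul_cancel₀ h2r.ne', Real.rpow_one]
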